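/- Let R be a commutative ring, V the free R-module on {v₊, v₋}, W the free R-module on {w₊, w₋}, and let m, ε, η be the band surgery maps defined in the context. Then ε ∘ (η ⊗ id_W) = m ∘ (id_V ⊗ ε) as R-linear maps V ⊗ W ⊗ W → V. -/

import Mathlib

open TensorProduct

/-- With `V` free on `{v₊, v₋}`, `W` free on `{w₊, w₋}`, and band
surgery maps `m, ε, η` as in the context, one has
`ε ∘ (η ⊗ id_W) = m ∘ (id_V ⊗ ε)` as linear maps `V ⊗ W ⊗ W → V`. -/
theorem merge_contractible_with_two_noncontractible
    {R V W : Type*} [CommRing R] [AddCommGroup V] [Module R V]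
    [AddCommGroup W] [Module R W]
    (b : Module.Basis Bool R V) (vp vm : V) (hvp : vp = b true) (hvm : vm = b false)
    (c : Module.Basis Bool R W) (wp wm : W) (hwp : wp = c true) (hwm : wm = c false)
    (m : V ⊗[R] V →ₗ[R] V)
    (hm₁ : m (vp ⊗ₜ vp) = vp) (hm₂ : m (vp ⊗ₜ vm) = vm)
    (hm₃ : m (vm ⊗ₜ vp) = vm) (hm₄ : m (vm ⊗ₜ vm) = 0)
    (ε : W ⊗[R] W →ₗ[R] V)
    (hε₁ : ε (wp ⊗ₜ wm) = vm) (hε₂ : ε (wm ⊗ₜ wp) = vm)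
    (hε₃ : ε (wp ⊗ₜ wp) = 0) (hε₄ : ε (wm ⊗ₜ wm) = 0)
    (η : V ⊗[R] W →ₗ[R] W)
    (hη₁ : ∀ w : W, η (vp ⊗ₜ w) = w) (hη₂ : ∀ w : W, η (vm ⊗ₜ w) = 0) :
    ε.comp (TensorProduct.map η (LinearMap.id : W →ₗ[R] W)) =
      (m.comp (TensorProduct.map (LinearMap.id : V →ₗ[R] V) ε)).comp
        (TensorProduct.assoc R V W W).toLinearMap := by
  apply Module.Basis.ext ((b.tensorProduct c).tensorProduct c)
  rintro ⟨⟨i, j⟩, k⟩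
  simp only [Module.Basis.tensorProduct_apply, LinearMap.comp_apply, TensorProduct.map_tmul,
    LinearEquiv.coe_coe, TensorProduct.assoc_tmul, LinearMap.id_apply]
  have hb : ∀ x : Bool, b x = if x then vp else vm := by
    rintro (_|_) <;> simp [hvp, hvm]
  have hc : ∀ x : Bool, c x = if x then wp else wm := by
    rintro (_|_) <;> simp [hwp, hwm]
  rw [hb, hc, hc]
  rcases i <;> rcases j <;> rcases k <;>
    simp [hη₁, hη₂, hε₁, hε₂, hε₃, hε₄, hm₁, hm₂, hm₃, hm₄]
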